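/- arXiv:1906.02265 — 4 statements merged into one kernel-verified Lean document; each statement's English description precedes it below -/
import Mathlib

section
/- Let Y be a real-valued continuous random variable, not almost surely zero, taking both positive and negative values with positive probability, whose moment generating function φ(λ) = E[e^{λY}] is finite for all real λ. Then there exists λ* > 0 with E[e^{λ*Y}] = 1 if and only if E[Y] < 0. -/
open MeasureTheory Filter Topology

lemma aux_abs_exp_sub_one_le (y : ℝ) : |Real.exp y - 1| ≤ |y| * Real.exp |y| := by
  rcases le_or_gt 0 y with h | h
  · rw [abs_of_nonneg h,
      abs_of_nonneg (by linarith [Real.add_one_le_exp y] : (0:ℝ) ≤ Real.exp y - 1)]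
    have h1 : 1 - y ≤ Real.exp (-y) := by linarith [Real.add_one_le_exp (-y)]
    have h3 : 0 < Real.exp y := Real.exp_pos y
    have h4 : (1 - y) * Real.exp y ≤ Real.exp (-y) * Real.exp y :=
      mul_le_mul_of_nonneg_right h1 h3.le
    rw [← Real.exp_add] at h4
    simp at h4
    nlinarith
  · rw [abs_of_neg h,
      abs_of_nonpos (by linarith [Real.exp_lt_one_iff.2 h] : Real.exp y - 1 ≤ 0)]
    have h1 : 1 + y ≤ Real.exp y := by linarith [Real.add_one_le_exp y]
    have h2 : (1:ℝ) ≤ Real.exp (-y) := by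
      rw [Real.one_le_exp_iff]; linarith
    nlinarith

theorem stmt0 {Ω : Type*} [MeasurableSpace Ω] (μ : Measure Ω) [IsProbabilityMeasure μ]
    (Y : Ω → ℝ) (hY : Measurable Y)
    (hpos : 0 < μ {ω | 0 < Y ω}) (hneg : 0 < μ {ω | Y ω < 0})
    (hmgf : ∀ l : ℝ, Integrable (fun ω => Real.exp (l * Y ω)) μ)
    (hint : Integrable Y μ) :
    (∃ l : ℝ, 0 < l ∧ ∫ ω, Real.exp (l * Y ω) ∂μ = 1) ↔ ∫ ω, Y ω ∂μ < 0 := by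
  constructor
  · rintro ⟨l, hl, hint1⟩
    have hI : Integrable (fun ω => 1 + l * Y ω) μ :=
      (integrable_const 1).add (hint.const_mul l)
    have hint2 : Integrable (fun ω => Real.exp (l * Y ω) - (1 + l * Y ω)) μ :=
      (hmgf l).sub hI
    have hnn : ∀ ω, 0 ≤ Real.exp (l * Y ω) - (1 + l * Y ω) := by
      intro ω
      linarith [Real.add_one_le_exp (l * Y ω)]
    have hval : ∫ ω, (Real.exp (l * Y ω) - (1 + l * Y ω)) ∂μ = - (l * ∫ ω, Y ω ∂μ) := by
      rw [integral_sub (hmgf l) hI,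
        integral_add (integrable_const 1) (hint.const_mul l), integral_const,
        integral_const_mul, hint1]
      simp
    have hpos' : 0 < ∫ ω, (Real.exp (l * Y ω) - (1 + l * Y ω)) ∂μ := by
      rw [integral_pos_iff_support_of_nonneg (fun ω => hnn ω) hint2]
      refine lt_of_lt_of_le hpos (measure_mono ?_)
      intro ω hω
      have hY' : 0 < Y ω := hω
      have hne : l * Y ω ≠ 0 := ne_of_gt (mul_pos hl hY')
      have := Real.add_one_lt_exp hne
      simp only [Function.mem_support]
      intro habs
      nlinarith
    rw [hval] at hpos'
    nlinarith
  · intro hEY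
    set φ : ℝ → ℝ := fun t => ∫ ω, Real.exp (t * Y ω) ∂μ with hφ
    -- Step 1: slope of φ at 0⁺ tends to E[Y] < 0
    have hbound_int : Integrable (fun ω => Real.exp (2 * Y ω) + Real.exp (-2 * Y ω)) μ :=
      (hmgf 2).add (hmgf (-2))
    have hkey : ∀ x : ℝ, |x| * Real.exp |x| ≤ Real.exp (2 * x) + Real.exp (-2 * x) := by
      intro x
      have h1 : |x| ≤ Real.exp |x| := by linarith [Real.add_one_le_exp |x|, abs_nonneg x]
      have h2 : |x| * Real.exp |x| ≤ Real.exp |x| * Real.exp |x| :=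
        mul_le_mul_of_nonneg_right h1 (Real.exp_pos _).le
      rw [← Real.exp_add] at h2
      have h3 : Real.exp (|x| + |x|) ≤ Real.exp (2 * x) + Real.exp (-2 * x) := by
        rcases abs_cases x with ⟨hx, _⟩ | ⟨hx, _⟩
        · rw [hx]
          have : Real.exp (x + x) = Real.exp (2 * x) := by ring_nf
          rw [this]
          linarith [Real.exp_pos (-2 * x)]
        · rw [hx]
          have : Real.exp (-x + -x) = Real.exp (-2 * x) := by ring_nf
          rw [this]
          linarith [Real.exp_pos (2 * x)]
      linarith
    have htend : Tendsto (fun l => ∫ ω, (Real.exp (l * Y ω) - 1) / l ∂μ) (𝓝[>] (0:ℝ))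
        (𝓝 (∫ ω, Y ω ∂μ)) := by
      apply tendsto_integral_filter_of_dominated_convergence
        (fun ω => Real.exp (2 * Y ω) + Real.exp (-2 * Y ω))
      · exact Eventually.of_forall fun l =>
          (((hmgf l).sub (integrable_const 1)).div_const l).aestronglyMeasurable
      · filter_upwards [Ioc_mem_nhdsGT_of_mem
          (by norm_num : (0:ℝ) ∈ Set.Ico 0 1)] with l hl
        apply ae_of_all
        intro ω
        have hl0 : 0 < l := hl.1
        have hl1 : l ≤ 1 := hl.2
        rw [Real.norm_eq_abs, abs_div, abs_of_pos hl0, div_le_iff₀ hl0]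
        calc |Real.exp (l * Y ω) - 1| ≤ |l * Y ω| * Real.exp |l * Y ω| :=
              aux_abs_exp_sub_one_le _
          _ = l * (|Y ω| * Real.exp (l * |Y ω|)) := by
              rw [abs_mul, abs_of_pos hl0]; ring
          _ ≤ l * (|Y ω| * Real.exp |Y ω|) := by
              have h4 : l * |Y ω| ≤ |Y ω| := by nlinarith [abs_nonneg (Y ω)]
              have h5 := Real.exp_le_exp.2 h4
              exact mul_le_mul_of_nonneg_left
                (mul_le_mul_of_nonneg_left h5 (abs_nonneg _)) hl0.le
          _ ≤ l * (Real.exp (2 * Y ω) + Real.exp (-2 * Y ω)) := by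
              nlinarith [hkey (Y ω)]
          _ = (Real.exp (2 * Y ω) + Real.exp (-2 * Y ω)) * l := by ring
      · exact hbound_int
      · apply ae_of_all
        intro ω
        have hd : HasDerivAt (fun t : ℝ => Real.exp (t * Y ω)) (Y ω) 0 := by
          have := ((hasDerivAt_id (0:ℝ)).mul_const (Y ω)).exp
          simpa using this
        have hslope := hasDerivAt_iff_tendsto_slope.mp hd
        have hmono : 𝓝[>] (0:ℝ) ≤ 𝓝[≠] (0:ℝ) :=
          nhdsWithin_mono 0 (fun x hx => ne_of_gt hx)
        refine (hslope.mono_left hmono).congr' ?_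
        filter_upwards [self_mem_nhdsWithin] with l hl
        have hl0 : (l:ℝ) ≠ 0 := ne_of_gt hl
        rw [slope_def_field]
        simp
    have hev : ∀ᶠ l in 𝓝[>] (0:ℝ), ∫ ω, (Real.exp (l * Y ω) - 1) / l ∂μ < 0 :=
      htend.eventually_lt_const hEY
    obtain ⟨l₀, hψ, hl₀pos⟩ := (hev.and eventually_mem_nhdsWithin).exists
    have hl₀pos : (0:ℝ) < l₀ := hl₀pos
    have hrw : ∫ ω, (Real.exp (l₀ * Y ω) - 1) / l₀ ∂μ = (φ l₀ - 1) / l₀ := by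
      rw [integral_div, integral_sub (hmgf l₀) (integrable_const 1), integral_const]
      simp [hφ]
    rw [hrw] at hψ
    have hφl₀ : φ l₀ < 1 := by
      have := (div_lt_iff₀ hl₀pos).mp hψ
      linarith
    -- Step 2: find δ > 0 with μ {δ ≤ Y} > 0
    obtain ⟨n, hn⟩ : ∃ n : ℕ, 0 < μ {ω | 1 / ((n:ℝ) + 1) ≤ Y ω} := by
      by_contra hcon
      push_neg at hcon
      simp only [le_zero_iff] at hcon
      have hsub : {ω | 0 < Y ω} ⊆ ⋃ n : ℕ, {ω | 1 / ((n:ℝ) + 1) ≤ Y ω} := by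
        intro ω hω
        obtain ⟨m, hm⟩ := exists_nat_one_div_lt (show 0 < Y ω from hω)
        exact Set.mem_iUnion.2 ⟨m, hm.le⟩
      exact absurd (measure_mono_null hsub (measure_iUnion_null hcon)) hpos.ne'
    set δ : ℝ := 1 / ((n:ℝ) + 1) with hδdef
    have hδ : 0 < δ := by positivity
    set S : Set Ω := {ω | δ ≤ Y ω} with hSdef
    have hS : MeasurableSet S := measurableSet_le measurable_const hY
    set ε : ℝ := (μ S).toReal with hεdef
    have hε : 0 < ε := ENNReal.toReal_pos hn.ne' (measure_ne_top μ S)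
    -- Step 3: choose L large with φ L > 1
    set L : ℝ := max l₀ ((Real.log (1 / ε) + 1) / δ) with hLdef
    have hLl₀ : l₀ ≤ L := le_max_left _ _
    have hLpos : 0 < L := lt_of_lt_of_le hl₀pos hLl₀
    have h1 : Real.log (1 / ε) + 1 ≤ L * δ := by
      have h := le_max_right l₀ ((Real.log (1 / ε) + 1) / δ)
      rw [div_le_iff₀ hδ] at h
      exact h
    have h2 : 1 / ε < Real.exp (L * δ) :=
      calc 1 / ε = Real.exp (Real.log (1 / ε)) := (Real.exp_log (by positivity)).symm
        _ < Real.exp (Real.log (1 / ε) + 1) := Real.exp_lt_exp.2 (by linarith)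
        _ ≤ Real.exp (L * δ) := Real.exp_le_exp.2 h1
    have h3 : 1 < Real.exp (L * δ) * ε := (div_lt_iff₀ hε).mp h2
    have hlow : Real.exp (L * δ) * ε ≤ φ L := by
      calc Real.exp (L * δ) * ε = ∫ _ω in S, Real.exp (L * δ) ∂μ := by
            rw [setIntegral_const, smul_eq_mul]; exact mul_comm _ _
        _ ≤ ∫ ω in S, Real.exp (L * Y ω) ∂μ := by
            apply setIntegral_mono_on ((integrable_const _).integrableOn)
              ((hmgf L).integrableOn) hS
            intro ω hω
            exact Real.exp_le_exp.2 (mul_le_mul_of_nonneg_left hω hLpos.le)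
        _ ≤ φ L := setIntegral_le_integral (hmgf L)
            (ae_of_all _ fun ω => (Real.exp_pos _).le)
    have hφL : 1 < φ L := lt_of_lt_of_le h3 hlow
    -- Step 4: continuity of φ
    have hcont : Continuous φ := by
      rw [continuous_iff_continuousAt]
      intro t₀
      apply continuousAt_of_dominated (F := fun t ω => Real.exp (t * Y ω))
        (bound := fun ω => Real.exp ((t₀ + 1) * Y ω) + Real.exp ((t₀ - 1) * Y ω))
      · exact Eventually.of_forall fun t => (hmgf t).aestronglyMeasurable
      · filter_upwards [Ioo_mem_nhds (by linarith : t₀ - 1 < t₀)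
          (by linarith : t₀ < t₀ + 1)] with t ht
        apply ae_of_all
        intro ω
        rw [Real.norm_eq_abs, Real.abs_exp]
        rcases le_or_gt 0 (Y ω) with h | h
        · calc Real.exp (t * Y ω) ≤ Real.exp ((t₀ + 1) * Y ω) :=
                Real.exp_le_exp.2 (mul_le_mul_of_nonneg_right ht.2.le h)
            _ ≤ _ := le_add_of_nonneg_right (Real.exp_pos _).le
        · calc Real.exp (t * Y ω) ≤ Real.exp ((t₀ - 1) * Y ω) := by
                apply Real.exp_le_exp.2
                nlinarith [ht.1]
            _ ≤ _ := le_add_of_nonneg_left (Real.exp_pos _).le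
      · exact (hmgf _).add (hmgf _)
      · exact ae_of_all _ fun ω =>
          (Real.continuous_exp.comp (continuous_id.mul continuous_const)).continuousAt
    -- Step 5: IVT
    obtain ⟨c, hc, hφc⟩ := intermediate_value_Icc hLl₀ hcont.continuousOn
      ⟨hφl₀.le, hφL.le⟩
    exact ⟨c, lt_of_lt_of_le hl₀pos hc.1, hφc⟩
end

section
/- Let W₁, ..., W_K be i.i.d. nonnegative random variables with tail bound P(W_k ≥ x) ≤ e^{−λx} for all x ≥ 0, where λ > 0. Then for any 0 < θ < λ and d ≥ 0, log E[exp(θ·max(0, W_k − d))] ≤ (θ/(λ−θ))·e^{−dλ}. -/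
open MeasureTheory Set Real

theorem stmt5 {Ω : Type*} [MeasurableSpace Ω] (μ : Measure Ω) [IsProbabilityMeasure μ]
    (W : Ω → ℝ) (hW : Measurable W) (hW0 : ∀ ω, 0 ≤ W ω)
    (lam : ℝ) (hlam : 0 < lam)
    (htail : ∀ x : ℝ, 0 ≤ x → (μ {ω | x ≤ W ω}).toReal ≤ Real.exp (-(lam * x)))
    (θ d : ℝ) (hθ : 0 < θ) (hθlam : θ < lam) (hd : 0 ≤ d) :
    Real.log (∫ ω, Real.exp (θ * max 0 (W ω - d)) ∂μ) ≤
      θ / (lam - θ) * Real.exp (-(d * lam)) := by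
  set Y : Ω → ℝ := fun ω => max 0 (W ω - d) with hYdef
  have hYm : Measurable Y := measurable_const.max (hW.sub measurable_const)
  have hY0 : ∀ ω, 0 ≤ Y ω := fun ω => le_max_left _ _
  set c : ℝ := θ / (lam - θ) * Real.exp (-(d * lam)) with hc
  have hlt : 0 < lam - θ := by linarith
  have hcnn : 0 ≤ c := by positivity
  -- inner interval integral
  have hint : ∀ y : ℝ, (∫ t in (0:ℝ)..y, θ * Real.exp (θ * t)) = Real.exp (θ * y) - 1 := by
    intro y
    have h1 : (∫ t in (0:ℝ)..y, θ * Real.exp (θ * t))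
        = θ * ∫ t in (0:ℝ)..y, Real.exp (θ * t) := intervalIntegral.integral_const_mul _ _
    rw [h1, intervalIntegral.integral_comp_mul_left (fun u => Real.exp u) hθ.ne',
      integral_exp]
    rw [smul_eq_mul, mul_zero, Real.exp_zero]
    field_simp
  -- layer cake
  have hlayer := lintegral_comp_eq_lintegral_meas_le_mul μ
    (f := Y) (g := fun t => θ * Real.exp (θ * t))
    (Filter.Eventually.of_forall hY0) hYm.aemeasurable
    (fun t _ => ((continuous_const.mul
      ((continuous_const.mul continuous_id).rexp)).intervalIntegrable _ _))
    (Filter.Eventually.of_forall (fun t => by positivity))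
  simp only [hint] at hlayer
  -- bound the RHS of layer cake
  have hbound : (∫⁻ t in Ioi (0:ℝ), μ {a | t ≤ Y a} * ENNReal.ofReal (θ * Real.exp (θ * t)))
      ≤ ENNReal.ofReal c := by
    have step1 : ∀ t ∈ Ioi (0:ℝ),
        μ {a | t ≤ Y a} * ENNReal.ofReal (θ * Real.exp (θ * t))
        ≤ ENNReal.ofReal (θ * Real.exp (-(d * lam)) * Real.exp (-(lam - θ) * t)) := by
      intro t ht
      have ht0 : (0:ℝ) < t := ht
      have hsub : {a | t ≤ Y a} ⊆ {a | d + t ≤ W a} := by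
        intro a ha
        simp only [Set.mem_setOf_eq, hYdef] at ha ⊢
        rcases le_max_iff.mp ha with h | h
        · linarith
        · linarith
      have hμ : μ {a | t ≤ Y a} ≤ ENNReal.ofReal (Real.exp (-(lam * (d + t)))) := by
        refine le_trans (measure_mono hsub) ?_
        have hfin : μ {a | d + t ≤ W a} ≠ ⊤ := measure_ne_top μ _
        rw [← ENNReal.ofReal_toReal hfin]
        exact ENNReal.ofReal_le_ofReal (htail (d + t) (by linarith))
      calc μ {a | t ≤ Y a} * ENNReal.ofReal (θ * Real.exp (θ * t))
          ≤ ENNReal.ofReal (Real.exp (-(lam * (d + t)))) * ENNReal.ofReal (θ * Real.exp (θ * t)) :=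
            mul_le_mul_left hμ _
        _ = ENNReal.ofReal (θ * Real.exp (-(d * lam)) * Real.exp (-(lam - θ) * t)) := by
            rw [← ENNReal.ofReal_mul (by positivity)]
            congr 1
            rw [mul_assoc, ← Real.exp_add, mul_comm _ (θ * _), mul_assoc, ← Real.exp_add]
            ring_nf
    have hIoi : (∫ t in Ioi (0:ℝ), Real.exp (-(lam - θ) * t)) = (lam - θ)⁻¹ := by
      have := integral_comp_mul_left_Ioi (fun u => Real.exp (-u)) 0 hlt
      simp only [mul_zero, integral_exp_neg_Ioi_zero, smul_eq_mul, mul_one, neg_mul] at this ⊢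
      exact this
    calc (∫⁻ t in Ioi (0:ℝ), μ {a | t ≤ Y a} * ENNReal.ofReal (θ * Real.exp (θ * t)))
        ≤ ∫⁻ t in Ioi (0:ℝ),
            ENNReal.ofReal (θ * Real.exp (-(d * lam)) * Real.exp (-(lam - θ) * t)) :=
          setLIntegral_mono_ae (by fun_prop) (Filter.Eventually.of_forall step1)
      _ = ENNReal.ofReal c := by
          rw [← ofReal_integral_eq_lintegral_ofReal]
          · rw [MeasureTheory.integral_const_mul, hIoi]
            congr 1
            rw [hc]
            ring
          · exact (exp_neg_integrableOn_Ioi 0 hlt).const_mul _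
          · exact Filter.Eventually.of_forall fun t => by positivity
  have hL : (∫⁻ ω, ENNReal.ofReal (Real.exp (θ * Y ω) - 1) ∂μ) ≤ ENNReal.ofReal c :=
    hlayer ▸ hbound
  -- integrability
  have hfnn : ∀ ω, 0 ≤ Real.exp (θ * Y ω) - 1 := by
    intro ω
    have : (1:ℝ) ≤ Real.exp (θ * Y ω) := Real.one_le_exp (by positivity)
    linarith
  have hfm : Measurable fun ω => Real.exp (θ * Y ω) - 1 :=
    ((hYm.const_mul θ).exp).sub measurable_const
  have hfi : Integrable (fun ω => Real.exp (θ * Y ω) - 1) μ := by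
    refine ⟨hfm.aestronglyMeasurable, ?_⟩
    rw [hasFiniteIntegral_iff_ofReal (Filter.Eventually.of_forall hfnn)]
    exact lt_of_le_of_lt hL ENNReal.ofReal_lt_top
  have hIexp : Integrable (fun ω => Real.exp (θ * Y ω)) μ := by
    have h := hfi.add (integrable_const (1:ℝ))
    exact h.congr (Filter.Eventually.of_forall fun ω => by
      simp only [Pi.add_apply]; ring)
  have h2 : (∫ ω, (Real.exp (θ * Y ω) - 1) ∂μ) ≤ c := by
    rw [integral_eq_lintegral_of_nonneg_ae (Filter.Eventually.of_forall hfnn)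
      hfm.aestronglyMeasurable]
    calc (∫⁻ ω, ENNReal.ofReal (Real.exp (θ * Y ω) - 1) ∂μ).toReal
        ≤ (ENNReal.ofReal c).toReal :=
          ENNReal.toReal_mono ENNReal.ofReal_ne_top hL
      _ = c := ENNReal.toReal_ofReal hcnn
  have hEq : (∫ ω, Real.exp (θ * Y ω) ∂μ) = (∫ ω, (Real.exp (θ * Y ω) - 1) ∂μ) + 1 := by
    rw [integral_sub hIexp (integrable_const 1)]
    simp
  have hpos : 0 < ∫ ω, Real.exp (θ * Y ω) ∂μ := by
    rw [hEq]
    have : 0 ≤ ∫ ω, (Real.exp (θ * Y ω) - 1) ∂μ :=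
      integral_nonneg hfnn
    linarith
  calc Real.log (∫ ω, Real.exp (θ * Y ω) ∂μ)
      ≤ (∫ ω, Real.exp (θ * Y ω) ∂μ) - 1 := Real.log_le_sub_one_of_pos hpos
    _ = ∫ ω, (Real.exp (θ * Y ω) - 1) ∂μ := by rw [hEq]; ring
    _ ≤ c := h2
end

section
/- Let S = Σ_{k=1}^K max(0, W_k − d) where W_k are i.i.d. nonnegative random variables with P(W_k ≥ x) ≤ e^{−λx}, λ > 0. Then for b > 0 with λb > K e^{−λd}, P(S ≥ b) ≤ exp(−(√(λb) − √(K e^{−λd}))²). -/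
open MeasureTheory Set

lemma mgf_aux {Ω : Type*} [MeasurableSpace Ω] (μ : Measure Ω) [IsProbabilityMeasure μ]
    (Y : Ω → ℝ) (hYm : Measurable Y) (hY0 : ∀ ω, 0 ≤ Y ω)
    (lam θ c : ℝ) (hθ : 0 < θ) (hθl : θ < lam) (hc : 0 < c)
    (htail : ∀ t : ℝ, 0 < t → μ {ω | t ≤ Y ω} ≤ ENNReal.ofReal (c * Real.exp (-(lam * t)))) :
    Integrable (fun ω => Real.exp (θ * Y ω)) μ ∧
      ∫ ω, Real.exp (θ * Y ω) ∂μ ≤ 1 + c * θ / (lam - θ) := by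
  set p : ℝ := lam / θ with hp
  have hp1 : 1 < p := (one_lt_div hθ).mpr hθl
  have hmeas : Measurable fun ω => Real.exp (θ * Y ω) := (hYm.const_mul θ).exp
  have hnn : ∀ ω, 0 ≤ Real.exp (θ * Y ω) := fun ω => (Real.exp_pos _).le
  set g : ℝ → ENNReal :=
    fun t => if t ≤ 1 then 1 else ENNReal.ofReal (c * Real.exp (-p * Real.log t)) with hg
  have hglog : ∀ t : ℝ, 1 < t → c * Real.exp (-p * Real.log t) = c * t ^ (-p) := by
    intro t ht
    rw [Real.rpow_def_of_pos (lt_trans one_pos ht), mul_comm (Real.log t)]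
  have hgm : Measurable g := by
    apply Measurable.ite (measurableSet_Iic (a := (1:ℝ))) measurable_const
    exact (((Real.measurable_log.const_mul (-p)).exp).const_mul c).ennreal_ofReal
  have hIN : IntegrableOn (fun t : ℝ => c * t ^ (-p)) (Ioi 1) := by
    exact (integrableOn_Ioi_rpow_of_lt (by linarith) one_pos).const_mul c
  have hval : ∫ t in Ioi (1:ℝ), c * t ^ (-p) = c * θ / (lam - θ) := by
    rw [integral_const_mul, integral_Ioi_rpow_of_lt (by linarith) one_pos]
    rw [Real.one_rpow]
    have hne1 : -p + 1 ≠ 0 := by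
      have : 1 < p := hp1
      intro h; linarith
    have hne2 : lam - θ ≠ 0 := by intro h; linarith
    rw [mul_div_assoc', div_eq_div_iff hne1 hne2, hp]
    field_simp
    ring
  have hInn : 0 ≤ᵐ[volume.restrict (Ioi (1:ℝ))] fun t : ℝ => c * t ^ (-p) := by
    filter_upwards [ae_restrict_mem measurableSet_Ioi] with t ht
    exact mul_nonneg hc.le (Real.rpow_nonneg (by linarith [mem_Ioi.mp ht]) _)
  have hsplit : ∫⁻ t in Ioi (0:ℝ), g t = ENNReal.ofReal (1 + c * θ / (lam - θ)) := by
    rw [← Ioc_union_Ioi_eq_Ioi (zero_le_one), lintegral_union measurableSet_Ioi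
      (Ioc_disjoint_Ioi le_rfl)]
    have h1 : ∫⁻ t in Ioc (0:ℝ) 1, g t = 1 := by
      rw [setLIntegral_congr_fun measurableSet_Ioc
        (fun t ht => if_pos ht.2), setLIntegral_one,
        Real.volume_Ioc]
      simp
    have h2 : ∫⁻ t in Ioi (1:ℝ), g t = ENNReal.ofReal (c * θ / (lam - θ)) := by
      rw [setLIntegral_congr_fun measurableSet_Ioi
        (fun t ht => ?_),
        ← ofReal_integral_eq_lintegral_ofReal hIN hInn, hval]
      show g t = ENNReal.ofReal (c * t ^ (-p))
      rw [hg]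
      simp only
      rw [if_neg (not_le.mpr (mem_Ioi.mp ht)), hglog t (mem_Ioi.mp ht)]
    rw [h1, h2, ENNReal.ofReal_add zero_le_one]
    · simp
    · rw [← hval]
      exact integral_nonneg_of_ae hInn
  have hbound : ∀ t ∈ Ioi (0:ℝ), μ {ω | t < Real.exp (θ * Y ω)} ≤ g t := by
    intro t ht
    by_cases h1 : t ≤ 1
    · simp only [hg, if_pos h1]
      exact prob_le_one
    · push_neg at h1
      simp only [hg, if_neg (not_le.mpr h1)]
      have hs : 0 < Real.log t / θ := div_pos (Real.log_pos h1) hθ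
      have hsub : {ω | t < Real.exp (θ * Y ω)} ⊆ {ω | Real.log t / θ ≤ Y ω} := by
        intro ω hω
        simp only [mem_setOf_eq] at hω ⊢
        have hlt : Real.log t < θ * Y ω := by
          have := Real.log_lt_log (lt_trans one_pos h1) hω
          rwa [Real.log_exp] at this
        exact le_of_lt ((div_lt_iff₀ hθ).mpr (by linarith))
      calc μ {ω | t < Real.exp (θ * Y ω)} ≤ μ {ω | Real.log t / θ ≤ Y ω} := measure_mono hsub
        _ ≤ ENNReal.ofReal (c * Real.exp (-(lam * (Real.log t / θ)))) := htail _ hs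
        _ = ENNReal.ofReal (c * Real.exp (-p * Real.log t)) := by
            congr 3
            rw [hp]
            field_simp
  have hkey : ∫⁻ ω, ENNReal.ofReal (Real.exp (θ * Y ω)) ∂μ ≤
      ENNReal.ofReal (1 + c * θ / (lam - θ)) := by
    rw [lintegral_eq_lintegral_meas_lt μ (Filter.Eventually.of_forall hnn)
      hmeas.aemeasurable]
    rw [← hsplit]
    exact setLIntegral_mono hgm hbound
  have hint : Integrable (fun ω => Real.exp (θ * Y ω)) μ := by
    refine ⟨hmeas.aestronglyMeasurable, ?_⟩
    rw [hasFiniteIntegral_iff_norm]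
    calc ∫⁻ ω, ENNReal.ofReal ‖Real.exp (θ * Y ω)‖ ∂μ
        = ∫⁻ ω, ENNReal.ofReal (Real.exp (θ * Y ω)) ∂μ := by
          congr 1; ext ω; rw [Real.norm_of_nonneg (hnn ω)]
      _ ≤ _ := hkey
      _ < ⊤ := ENNReal.ofReal_lt_top
  refine ⟨hint, ?_⟩
  rw [integral_eq_lintegral_of_nonneg_ae (Filter.Eventually.of_forall hnn)
    hmeas.aestronglyMeasurable]
  have hq : 0 ≤ 1 + c * θ / (lam - θ) := by
    have h3 : 0 ≤ c * θ / (lam - θ) := div_nonneg (by positivity) (by linarith)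
    linarith
  calc (∫⁻ ω, ENNReal.ofReal (Real.exp (θ * Y ω)) ∂μ).toReal
      ≤ (ENNReal.ofReal (1 + c * θ / (lam - θ))).toReal :=
        ENNReal.toReal_mono ENNReal.ofReal_ne_top hkey
    _ = 1 + c * θ / (lam - θ) := ENNReal.toReal_ofReal hq
theorem stmt6 {Ω : Type*} [MeasurableSpace Ω] (μ : Measure Ω) [IsProbabilityMeasure μ]
    (K : ℕ) (hK : 0 < K) (W : Fin K → Ω → ℝ)
    (hWm : ∀ k, Measurable (W k)) (hW0 : ∀ k ω, 0 ≤ W k ω)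
    (hind : ProbabilityTheory.iIndepFun W μ)
    (hid : ∀ k k' : Fin K, Measure.map (W k) μ = Measure.map (W k') μ)
    (lam d b : ℝ) (hlam : 0 < lam) (hd : 0 ≤ d) (hb : 0 < b)
    (htail : ∀ k, ∀ x : ℝ, 0 ≤ x → (μ {ω | x ≤ W k ω}).toReal ≤ Real.exp (-(lam * x)))
    (hbc : (K : ℝ) * Real.exp (-(lam * d)) < lam * b) :
    (μ {ω | b ≤ ∑ k, max 0 (W k ω - d)}).toReal ≤
      Real.exp (-(Real.sqrt (lam * b) - Real.sqrt ((K : ℝ) * Real.exp (-(lam * d))))^2) := by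
  set c : ℝ := Real.exp (-(lam * d)) with hcdef
  have hc : 0 < c := Real.exp_pos _
  set u := Real.sqrt (lam * b) with hu
  set v := Real.sqrt ((K : ℝ) * c) with hv
  have hKpos : (0:ℝ) < K := by exact_mod_cast hK
  have hKc : 0 < (K : ℝ) * c := mul_pos hKpos hc
  have hu2 : u ^ 2 = lam * b := Real.sq_sqrt (by positivity)
  have hv2 : v ^ 2 = (K : ℝ) * c := Real.sq_sqrt hKc.le
  have hupos : 0 < u := Real.sqrt_pos.mpr (by positivity)
  have hvpos : 0 < v := Real.sqrt_pos.mpr hKc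
  have huv : v < u := Real.sqrt_lt_sqrt hKc.le hbc
  set θ := lam * (u - v) / u with hθdef
  have hθpos : 0 < θ := div_pos (mul_pos hlam (by linarith)) hupos
  have hθl : θ < lam := by
    rw [hθdef, div_lt_iff₀ hupos]
    nlinarith
  have hlamθ : lam - θ = lam * v / u := by
    rw [hθdef]
    field_simp
    ring
  set X : Fin K → Ω → ℝ := fun k ω => max 0 (W k ω - d) with hXdef
  have hXm : ∀ k, Measurable (X k) :=
    fun k => measurable_const.max ((hWm k).sub measurable_const)
  have hXtail : ∀ k, ∀ t : ℝ, 0 < t →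
      μ {ω | t ≤ X k ω} ≤ ENNReal.ofReal (c * Real.exp (-(lam * t))) := by
    intro k t ht
    have hseq : {ω | t ≤ X k ω} = {ω | t + d ≤ W k ω} := by
      ext ω
      simp only [hXdef, mem_setOf_eq, le_max_iff]
      constructor
      · rintro (h | h)
        · linarith
        · linarith
      · intro h; right; linarith
    rw [hseq]
    have h1 := htail k (t + d) (by linarith)
    have h2 : Real.exp (-(lam * (t + d))) = c * Real.exp (-(lam * t)) := by
      rw [hcdef, ← Real.exp_add]
      ring_nf
    rw [← ENNReal.ofReal_toReal (measure_ne_top μ _)]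
    exact ENNReal.ofReal_le_ofReal (by rw [← h2]; exact h1)
  have hmg : ∀ k, Integrable (fun ω => Real.exp (θ * X k ω)) μ ∧
      ∫ ω, Real.exp (θ * X k ω) ∂μ ≤ 1 + c * θ / (lam - θ) :=
    fun k => mgf_aux μ (X k) (hXm k) (fun ω => le_max_left _ _) lam θ c hθpos hθl hc
      (hXtail k)
  have hindX : ProbabilityTheory.iIndepFun X μ :=
    hind.comp (fun _ x => max 0 (x - d))
      (fun _ => measurable_const.max (measurable_id.sub measurable_const))
  have hSint : Integrable (fun ω => Real.exp (θ * (∑ k, X k) ω)) μ :=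
    hindX.integrable_exp_mul_sum hXm (fun k _ => (hmg k).1)
  have hchern := ProbabilityTheory.measure_ge_le_exp_mul_mgf (X := ∑ k, X k) (μ := μ)
    (t := θ) b hθpos.le hSint
  have hset : {ω | b ≤ ∑ k, max 0 (W k ω - d)} = {ω | b ≤ (∑ k, X k) ω} := by
    ext ω
    simp [hXdef, Finset.sum_apply]
  set q : ℝ := c * θ / (lam - θ) with hq
  have hqnn : 0 ≤ q := div_nonneg (by positivity) (by linarith)
  have hmgf_sum : ProbabilityTheory.mgf (∑ k, X k) μ θ ≤ Real.exp ((K : ℝ) * q) := by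
    rw [ProbabilityTheory.iIndepFun.mgf_sum hindX hXm Finset.univ]
    calc ∏ k, ProbabilityTheory.mgf (X k) μ θ ≤ ∏ _k : Fin K, Real.exp q := by
          apply Finset.prod_le_prod
          · exact fun k _ => ProbabilityTheory.mgf_nonneg
          · intro k _
            refine le_trans ((hmg k).2) ?_
            have := Real.add_one_le_exp q
            rw [hq]
            linarith
      _ = Real.exp ((K : ℝ) * q) := by
          rw [Finset.prod_const, Finset.card_univ, Fintype.card_fin, ← Real.exp_nat_mul]
  have hexp_eq : -θ * b + (K : ℝ) * q = -(u - v) ^ 2 := by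
    have hθb : θ * b = u * (u - v) := by
      rw [hθdef]
      rw [div_mul_eq_mul_div, div_eq_iff hupos.ne']
      linear_combination (-(u - v)) * hu2
    have hKq : (K : ℝ) * q = v * (u - v) := by
      rw [hq, hlamθ, hθdef]
      field_simp
      linear_combination (-(u - v)) * hv2
    rw [hKq]
    linear_combination -hθb
  calc (μ {ω | b ≤ ∑ k, max 0 (W k ω - d)}).toReal
      = (μ {ω | b ≤ (∑ k, X k) ω}).toReal := by rw [hset]
    _ ≤ Real.exp (-θ * b) * ProbabilityTheory.mgf (∑ k, X k) μ θ := hchern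
    _ ≤ Real.exp (-θ * b) * Real.exp ((K : ℝ) * q) := by
        exact mul_le_mul_of_nonneg_left hmgf_sum (Real.exp_pos _).le
    _ = Real.exp (-θ * b + (K : ℝ) * q) := (Real.exp_add _ _).symm
    _ = Real.exp (-(u - v) ^ 2) := by rw [hexp_eq]
end

section
/- With μ_{ε,h} as above and M(α) = ess sup_x (f₁(x)^α − f₀(x)^α)/α < ∞, the supremum of μ_{ε,h} over all contamination densities g equals −((1−ε)/(1+α)) d_α(f₀, f₁) + ε M(α). Consequently, sup_g μ_{ε,h} > 0 if and only if ε > d_α(f₀,f₁) / (d_α(f₀,f₁) + (1+α)M(α)). -/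
open MeasureTheory

theorem stmt16 (α ε dα M : ℝ) (hα : 0 < α) (hε : ε ∈ Set.Ico (0:ℝ) 1)
    (hdα : 0 < dα) (hM : 0 < M)
    (f₀ f₁ : ℝ → ℝ) (h₀m : Measurable f₀) (h₁m : Measurable f₁)
    (ψ : ℝ → ℝ) (hψ : ψ = fun x => (f₁ x ^ α - f₀ x ^ α) / α)
    (hub : ∀ᵐ x ∂(volume : Measure ℝ), ψ x ≤ M)
    (hlub : ∀ M' : ℝ, (∀ᵐ x ∂(volume : Measure ℝ), ψ x ≤ M') → M ≤ M') :
    sSup {v : ℝ | ∃ g : ℝ → ℝ, Measurable g ∧ (∀ x, 0 ≤ g x) ∧ (∫ x : ℝ, g x = 1) ∧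
        Integrable (fun x : ℝ => ψ x * g x) ∧
        v = -((1 - ε) / (1 + α)) * dα + ε * ∫ x : ℝ, ψ x * g x} =
      -((1 - ε) / (1 + α)) * dα + ε * M ∧
    (0 < -((1 - ε) / (1 + α)) * dα + ε * M ↔ dα / (dα + (1 + α) * M) < ε) := by
  obtain ⟨hε0, hε1⟩ := hε
  have h1α : (0:ℝ) < 1 + α := by linarith
  have hψm : Measurable ψ := by
    rw [hψ]
    fun_prop
  set C : ℝ := -((1 - ε) / (1 + α)) * dα with hCdef
  set S : Set ℝ := {v : ℝ | ∃ g : ℝ → ℝ, Measurable g ∧ (∀ x, 0 ≤ g x) ∧ (∫ x : ℝ, g x = 1) ∧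
        Integrable (fun x : ℝ => ψ x * g x) ∧
        v = C + ε * ∫ x : ℝ, ψ x * g x} with hSdef
  -- key construction
  have key : ∀ M' : ℝ, M' < M → ∃ g : ℝ → ℝ, Measurable g ∧ (∀ x, 0 ≤ g x) ∧
      (∫ x : ℝ, g x = 1) ∧ Integrable (fun x : ℝ => ψ x * g x) ∧
      M' < (∫ x : ℝ, ψ x * g x) ∧ (∫ x : ℝ, ψ x * g x) ≤ M := by
    intro M' hM'
    set M'' : ℝ := (M' + M) / 2 with hM''def
    have hM''1 : M' < M'' := by simp only [hM''def]; linarith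
    have hM''2 : M'' < M := by simp only [hM''def]; linarith
    have hpos : volume {x : ℝ | M'' < ψ x} ≠ 0 := by
      intro h0
      have hae : ∀ᵐ x ∂(volume : Measure ℝ), ψ x ≤ M'' := by
        rw [ae_iff]; simpa [not_le] using h0
      linarith [hlub M'' hae]
    have hnull : volume {x : ℝ | M < ψ x} = 0 := by
      have h := hub; rw [ae_iff] at h; simpa [not_le] using h
    set B : Set ℝ := {x : ℝ | M'' < ψ x} \ {x : ℝ | M < ψ x} with hBdef
    have hBm : MeasurableSet B :=
      (measurableSet_lt measurable_const hψm).diff (measurableSet_lt measurable_const hψm)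
    have hBpos : volume B ≠ 0 := by
      rw [hBdef, measure_diff_null hnull]; exact hpos
    have hBU : B = ⋃ n : ℕ, B ∩ Set.Icc (-(n:ℝ)) (n:ℝ) := by
      ext x
      simp only [Set.mem_iUnion, Set.mem_inter_iff, Set.mem_Icc]
      constructor
      · intro hx
        obtain ⟨n, hn⟩ := exists_nat_ge |x|
        exact ⟨n, hx, (abs_le.mp hn).1, (abs_le.mp hn).2⟩
      · rintro ⟨n, hx, -⟩; exact hx
    have hex : ∃ n : ℕ, volume (B ∩ Set.Icc (-(n:ℝ)) (n:ℝ)) ≠ 0 := by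
      by_contra hc
      push_neg at hc
      exact hBpos (by rw [hBU]; exact measure_iUnion_null hc)
    obtain ⟨n, hn0⟩ := hex
    set A : Set ℝ := B ∩ Set.Icc (-(n:ℝ)) (n:ℝ) with hAdef
    have hA : MeasurableSet A := hBm.inter measurableSet_Icc
    have hAlt : volume A < ⊤ := by
      refine lt_of_le_of_lt (measure_mono Set.inter_subset_right) ?_
      rw [Real.volume_Icc]; exact ENNReal.ofReal_lt_top
    have hAtop : volume A ≠ ⊤ := hAlt.ne
    set c : ℝ := (volume A).toReal with hcdef
    have hc : 0 < c := ENNReal.toReal_pos hn0 hAtop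
    set g : ℝ → ℝ := A.indicator (fun _ => c⁻¹) with hgdef
    have hgm : Measurable g := measurable_const.indicator hA
    have hgnn : ∀ x, 0 ≤ g x := fun x => Set.indicator_nonneg (fun _ _ => by positivity) x
    have hg1 : ∫ x : ℝ, g x = 1 := by
      rw [hgdef, integral_indicator_const _ hA, smul_eq_mul, measureReal_def, ← hcdef]
      exact mul_inv_cancel₀ hc.ne'
    have hAsub : ∀ x ∈ A, M'' < ψ x ∧ ψ x ≤ M := by
      intro x hx
      exact ⟨hx.1.1, not_lt.mp hx.1.2⟩
    set K : ℝ := max |M''| |M| with hKdef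
    have hK : ∀ x ∈ A, ‖ψ x‖ ≤ K := by
      intro x hx
      obtain ⟨h1, h2⟩ := hAsub x hx
      rw [Real.norm_eq_abs, abs_le]
      constructor
      · have := neg_abs_le M''
        have := le_max_left |M''| |M|
        linarith
      · have := le_abs_self M
        have := le_max_right |M''| |M|
        linarith
    have hψA : IntegrableOn ψ A := by
      refine Integrable.mono' (integrableOn_const hAtop)
        hψm.aestronglyMeasurable ((ae_restrict_iff' hA).mpr (ae_of_all _ hK))
    have hmul : (fun x : ℝ => ψ x * g x) = A.indicator (fun x => ψ x * c⁻¹) := by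
      funext x
      by_cases hx : x ∈ A
      · simp [hgdef, Set.indicator_of_mem hx]
      · simp [hgdef, Set.indicator_of_notMem hx]
    have hint : Integrable (fun x : ℝ => ψ x * g x) := by
      rw [hmul]
      exact IntegrableOn.integrable_indicator (hψA.mul_const c⁻¹) hA
    have hI : ∫ x : ℝ, ψ x * g x = (∫ x in A, ψ x) * c⁻¹ := by
      rw [hmul, integral_indicator hA, integral_mul_const]
    have hlow : c * M'' ≤ ∫ x in A, ψ x := by
      have h := setIntegral_mono_on (integrableOn_const hAtop) hψA hA
        (fun x hx => (hAsub x hx).1.le)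
      rwa [setIntegral_const, smul_eq_mul, measureReal_def, ← hcdef] at h
    have hhigh : (∫ x in A, ψ x) ≤ c * M := by
      have h := setIntegral_mono_on hψA (integrableOn_const hAtop) hA
        (fun x hx => (hAsub x hx).2)
      rwa [setIntegral_const, smul_eq_mul, measureReal_def, ← hcdef] at h
    refine ⟨g, hgm, hgnn, hg1, hint, ?_, ?_⟩
    · rw [hI, ← div_eq_mul_inv]
      rw [lt_div_iff₀ hc]
      calc M' * c < M'' * c := by nlinarith
        _ ≤ _ := by linarith [hlow]
    · rw [hI, ← div_eq_mul_inv, div_le_iff₀ hc]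
      linarith [hhigh]
  -- upper bound
  have hub' : ∀ v ∈ S, v ≤ C + ε * M := by
    rintro v ⟨g, hgm, hgnn, hg1, hint, rfl⟩
    have hgInt : Integrable g := by
      by_contra hni
      rw [integral_undef hni] at hg1
      norm_num at hg1
    have hIle : (∫ x : ℝ, ψ x * g x) ≤ M := by
      have h1 : (∫ x : ℝ, ψ x * g x) ≤ ∫ x : ℝ, M * g x := by
        refine integral_mono_ae hint (hgInt.const_mul M) ?_
        filter_upwards [hub] with x hx
        exact mul_le_mul_of_nonneg_right hx (hgnn x)
      rwa [integral_const_mul, hg1, mul_one] at h1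
    nlinarith
  have hne : S.Nonempty := by
    obtain ⟨g, hgm, hgnn, hg1, hint, -, -⟩ := key (M - 1) (by linarith)
    exact ⟨C + ε * ∫ x : ℝ, ψ x * g x, g, hgm, hgnn, hg1, hint, rfl⟩
  have hbdd : BddAbove S := ⟨C + ε * M, hub'⟩
  constructor
  · apply le_antisymm (csSup_le hne hub')
    rcases eq_or_lt_of_le hε0 with h0 | h0
    · obtain ⟨g, hgm, hgnn, hg1, hint, -, -⟩ := key (M - 1) (by linarith)
      have hmem : C + ε * (∫ x : ℝ, ψ x * g x) ∈ S :=
        ⟨g, hgm, hgnn, hg1, hint, rfl⟩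
      have := le_csSup hbdd hmem
      rw [← h0] at this ⊢
      simpa using this
    · by_contra hlt
      push_neg at hlt
      set M' : ℝ := (sSup S - C) / ε with hM'def
      have hM'lt : M' < M := by
        rw [hM'def, div_lt_iff₀ h0]
        linarith
      obtain ⟨g, hgm, hgnn, hg1, hint, ht1, -⟩ := key M' hM'lt
      have hmem : C + ε * (∫ x : ℝ, ψ x * g x) ∈ S :=
        ⟨g, hgm, hgnn, hg1, hint, rfl⟩
      have hle := le_csSup hbdd hmem
      have : sSup S < C + ε * (∫ x : ℝ, ψ x * g x) := by
        have h2 : ε * M' < ε * (∫ x : ℝ, ψ x * g x) := by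
          exact mul_lt_mul_of_pos_left ht1 h0
        have h3 : ε * M' = sSup S - C := by
          rw [hM'def, mul_div_cancel₀ _ h0.ne']
        linarith
      linarith
  · have e1 : C + ε * M = ((ε * (dα + (1 + α) * M)) - dα) / (1 + α) := by
      rw [hCdef]; field_simp; ring
    rw [e1, lt_div_iff₀ h1α, zero_mul]
    have hden : (0:ℝ) < dα + (1 + α) * M := by positivity
    constructor
    · intro h
      rw [div_lt_iff₀ hden]
      linarith
    · intro h
      rw [div_lt_iff₀ hden] at h
      linarith
end
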